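/- Let h¹, h² : ℝⁿ → ℝ be convex and differentiable, set h = h¹ − h², and suppose ∇h and ∇h¹ are both (L,κ)-Hölder continuous with L > 0 and κ ∈ (0,1]. For y ∈ ℝⁿ define h̃(x|y) := h¹(x) − h²(y) − ⟨∇h²(y), x − y⟩. Then: (a) h̃(·|y) is convex and differentiable; (b) h̃(x|y) ≥ h(x) for all x ∈ ℝⁿ, with h̃(y|y) = h(y); (c) ‖∇h̃(x|y) − ∇h(x)‖ ≤ 2L‖x − y‖^κ for all x, y ∈ ℝⁿ; (d) if S ⊆ ℝⁿ and M > 0 satisfy ‖∇h¹(x)‖ ≤ M and ‖∇h²(x)‖ ≤ M for all x ∈ S, then ‖∇h̃(x|y)‖ ≤ 2M for all x, y ∈ S. -/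

import Mathlib

open scoped RealInnerProductSpace
open Real Set

lemma convex_grad_le {E : Type*} [NormedAddCommGroup E] [InnerProductSpace ℝ E] [CompleteSpace E]
    {f : E → ℝ} (hf : ConvexOn ℝ univ f) {y gy : E} (hg : HasGradientAt f gy y) (x : E) :
    f y + ⟪gy, x - y⟫ ≤ f x := by
  set v := x - y with hv
  have hc : HasDerivAt (fun t : ℝ => y + t • v) v 0 := by
    simpa using ((hasDerivAt_id (0:ℝ)).smul_const v).const_add y
  have hF := hasGradientAt_iff_hasFDerivAt.mp hg
  have hc0 : (fun t : ℝ => y + t • v) 0 = y := by simp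
  have hderiv : HasDerivAt (fun t : ℝ => f (y + t • v)) ⟪gy, v⟫ 0 := by
    rw [← hc0] at hF
    have := hF.comp_hasDerivAt (x := (0:ℝ)) hc
    simpa [Function.comp_def] using this
  have hconv : ConvexOn ℝ univ (fun t : ℝ => f (y + t • v)) := by
    have := hf.comp_affineMap (AffineMap.lineMap y x)
    simp only [preimage_univ] at this
    convert this using 2 with t
    case e'_12 =>
      simp [AffineMap.lineMap_apply, hv]
      abel
    all_goals rfl
  have := hconv.le_slope_of_hasDerivAt (mem_univ (0:ℝ)) (mem_univ (1:ℝ)) one_pos hderiv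
  rw [slope_def_field] at this
  simp only [one_smul, zero_smul, add_zero, sub_zero, div_one] at this
  have hx1 : y + v = x := by rw [hv]; abel
  rw [hx1] at this
  linarith

/-- (Proposition 3 in the paper: DC surrogates.) For `h = h¹ − h²` a
difference of convex functions, the surrogate `h̃(x|y) = h¹(x) − h²(y) − ⟨∇h²(y), x − y⟩`
is a convex differentiable majorant of `h`, exact at `y`, whose gradient
`∇h̃(x|y) = ∇h¹(x) − ∇h²(y)` satisfies `‖∇h̃(x|y) − ∇h(x)‖ ≤ 2L‖x − y‖^κ`, and is
bounded by `2M` when both gradients are bounded by `M` on a set `S`. -/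
theorem dc_surrogate {n : ℕ}
    (h1 h2 : EuclideanSpace ℝ (Fin n) → ℝ)
    (g1 g2 : EuclideanSpace ℝ (Fin n) → EuclideanSpace ℝ (Fin n))
    (hconv1 : ConvexOn ℝ univ h1) (hconv2 : ConvexOn ℝ univ h2)
    (hg1 : ∀ x, HasGradientAt h1 (g1 x) x) (hg2 : ∀ x, HasGradientAt h2 (g2 x) x)
    (L κ : ℝ) (hL : 0 < L) (hκ0 : 0 < κ) (hκ1 : κ ≤ 1)
    -- ∇h = ∇h¹ − ∇h² is (L,κ)-Hölder continuous
    (hHh : ∀ x y, ‖(g1 x - g2 x) - (g1 y - g2 y)‖ ≤ L * ‖x - y‖ ^ κ)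
    -- ∇h¹ is (L,κ)-Hölder continuous
    (hH1 : ∀ x y, ‖g1 x - g1 y‖ ≤ L * ‖x - y‖ ^ κ) :
    -- (a) h̃(·|y) is convex and differentiable with gradient ∇h̃(x|y) = ∇h¹(x) − ∇h²(y)
    (∀ y, ConvexOn ℝ univ (fun x => h1 x - h2 y - ⟪g2 y, x - y⟫) ∧
      ∀ x, HasGradientAt (fun x => h1 x - h2 y - ⟪g2 y, x - y⟫) (g1 x - g2 y) x) ∧
    -- (b) majorization with equality at the base point
    (∀ x y, h1 x - h2 x ≤ h1 x - h2 y - ⟪g2 y, x - y⟫) ∧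
    (∀ y, h1 y - h2 y - ⟪g2 y, y - y⟫ = h1 y - h2 y) ∧
    -- (c) the gradient error bound, where ∇h(x) = ∇h¹(x) − ∇h²(x)
    (∀ x, HasGradientAt (fun z => h1 z - h2 z) (g1 x - g2 x) x) ∧
    (∀ x y, ‖(g1 x - g2 y) - (g1 x - g2 x)‖ ≤ 2 * L * ‖x - y‖ ^ κ) ∧
    -- (d) boundedness of the surrogate gradient on a set where both gradients are bounded
    (∀ (S : Set (EuclideanSpace ℝ (Fin n))) (M : ℝ), 0 < M →
      (∀ x ∈ S, ‖g1 x‖ ≤ M) → (∀ x ∈ S, ‖g2 x‖ ≤ M) →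
      ∀ x ∈ S, ∀ y ∈ S, ‖g1 x - g2 y‖ ≤ 2 * M) := by
  refine ⟨?_, ?_, ?_, ?_, ?_, ?_⟩
  · intro y
    constructor
    · have haff : ConvexOn ℝ univ
          (fun x : EuclideanSpace ℝ (Fin n) => -(h2 y) - ⟪g2 y, x - y⟫) := by
        refine ⟨convex_univ, fun a _ b _ p q hp hq hpq => ?_⟩
        simp only [inner_sub_right, inner_add_right, inner_smul_right, smul_eq_mul]
        have hq : q = 1 - p := by linarith
        subst hq
        apply le_of_eq
        ring
      have hsum := hconv1.add haff
      have hfun : (fun x : EuclideanSpace ℝ (Fin n) => h1 x - h2 y - ⟪g2 y, x - y⟫)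
          = h1 + fun x => -(h2 y) - ⟪g2 y, x - y⟫ := by
        funext x
        simp only [Pi.add_apply]
        ring
      rw [hfun]
      exact hsum
    · intro x
      rw [hasGradientAt_iff_hasFDerivAt]
      have A := hasGradientAt_iff_hasFDerivAt.mp (hg1 x)
      have B : HasFDerivAt (fun z : EuclideanSpace ℝ (Fin n) => ⟪g2 y, z - y⟫)
          ((InnerProductSpace.toDual ℝ _) (g2 y)) x := by
        have hlin := ((InnerProductSpace.toDual ℝ (EuclideanSpace ℝ (Fin n))) (g2 y)).hasFDerivAt
          (x := x)
        have : (fun z : EuclideanSpace ℝ (Fin n) => ⟪g2 y, z - y⟫)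
            = fun z => (InnerProductSpace.toDual ℝ _) (g2 y) z - ⟪g2 y, y⟫ := by
          funext z
          simp [inner_sub_right, InnerProductSpace.toDual_apply_apply]
        rw [this]
        exact hlin.sub_const _
      have := (A.sub_const (h2 y)).sub B
      simpa [map_sub, Pi.sub_def] using this
  · intro x y
    have := convex_grad_le hconv2 (hg2 y) x
    linarith
  · intro y; simp
  · intro x
    rw [hasGradientAt_iff_hasFDerivAt]
    have A := hasGradientAt_iff_hasFDerivAt.mp (hg1 x)
    have B := hasGradientAt_iff_hasFDerivAt.mp (hg2 x)
    simpa [map_sub, Pi.sub_def] using A.sub B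
  · intro x y
    have key : g1 x - g2 y - (g1 x - g2 x) = (g1 x - g1 y) - ((g1 x - g2 x) - (g1 y - g2 y)) := by
      abel
    rw [key]
    calc ‖(g1 x - g1 y) - ((g1 x - g2 x) - (g1 y - g2 y))‖
        ≤ ‖g1 x - g1 y‖ + ‖(g1 x - g2 x) - (g1 y - g2 y)‖ := norm_sub_le _ _
      _ ≤ L * ‖x - y‖ ^ κ + L * ‖x - y‖ ^ κ := add_le_add (hH1 x y) (hHh x y)
      _ = 2 * L * ‖x - y‖ ^ κ := by ring
  · intro S M _ hb1 hb2 x hx y hy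
    calc ‖g1 x - g2 y‖ ≤ ‖g1 x‖ + ‖g2 y‖ := norm_sub_le _ _
      _ ≤ M + M := add_le_add (hb1 x hx) (hb2 y hy)
      _ = 2 * M := by ring
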